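/- Let n, m ≥ 2 be positive integers and define a : ℕ → ℕ by a(1) = n and a(t+1) = a(t) + n - ⌊a(t)/m⌋. Then there exists t₀ such that a(t) = n·m for all t ≥ t₀. -/
import Mathlib


/-- Frege's total-score recursion eventually stabilizes at n·m. -/
theorem frege_total_score_stabilizes (n m : ℕ) (hn : 1 ≤ n) (hm : 2 ≤ m)
    (a : ℕ → ℕ) (ha1 : a 1 = n)
    (harec : ∀ t, 1 ≤ t → a (t + 1) = a t + n - a t / m) :
    ∃ t₀ : ℕ, ∀ t, t₀ ≤ t → a t = n * m := by
  have hm0 : 0 < m := by omega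
  -- one step from the fixed point stays
  have hfix : ∀ t, 1 ≤ t → a t = n * m → a (t + 1) = n * m := by
    intro t ht h
    have hnm : n * m / m = n := by rw [Nat.mul_comm]; exact Nat.mul_div_cancel_left n hm0
    rw [harec t ht, h, hnm]
    omega
  -- key invariant
  have key : ∀ k, a (1 + k) ≤ n * m ∧ (n + k ≤ a (1 + k) ∨ a (1 + k) = n * m) := by
    intro k
    induction k with
    | zero =>
      simp only [Nat.add_zero, ha1]
      exact ⟨by nlinarith, Or.inl (by omega)⟩
    | succ k ih =>
      obtain ⟨h1, h2⟩ := ih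
      have ht : 1 ≤ 1 + k := by omega
      have hrec := harec (1 + k) ht
      have hstep : 1 + (k + 1) = (1 + k) + 1 := by omega
      rw [hstep, hrec]
      rcases eq_or_lt_of_le h1 with heq | hlt
      · have hnm : n * m / m = n := by rw [Nat.mul_comm]; exact Nat.mul_div_cancel_left n hm0
        rw [heq, hnm]
        constructor
        · omega
        · right; omega
      · -- a (1+k) < n * m
        set x := a (1 + k) with hx
        have hq : x / m < n := by
          rw [Nat.div_lt_iff_lt_mul hm0]
          nlinarith
        have hdm := Nat.div_add_mod x m
        have hr : x % m < m := Nat.mod_lt x hm0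
        set q := x / m with hqd
        set r := x % m with hrd
        have hub : x + n - q ≤ n * m := by
          have h3 : (m - 1) * q + (m - 1) ≤ (m - 1) * (n - 1) + (m - 1) :=
            by gcongr <;> omega
          have h4 : (m - 1) * (n - 1) + (m - 1) + n = n * m := by
            obtain ⟨M, rfl⟩ : ∃ M, m = M + 2 := ⟨m - 2, by omega⟩
            obtain ⟨N, rfl⟩ : ∃ N, n = N + 1 := ⟨n - 1, by omega⟩
            show (M + 1) * N + (M + 1) + (N + 1) = (N + 1) * (M + 2)
            ring
          have h5 : (m - 1) * q + r ≤ (m - 1) * q + (m - 1) := by omega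
          -- x = m * q + r
          have hx2 : x = m * q + r := by omega
          have h6 : (m - 1) * q = m * q - q := Nat.sub_one_mul m q
          have h7 : q ≤ m * q := Nat.le_mul_of_pos_left q hm0
          omega
        refine ⟨hub, ?_⟩
        cases h2 with
        | inl h2 =>
          left
          omega
        | inr h2 => omega
  -- concrete stabilization
  have hend : a (1 + n * m) = n * m := by
    obtain ⟨h1, h2⟩ := key (n * m)
    omega
  refine ⟨1 + n * m, ?_⟩
  intro t ht
  obtain ⟨d, rfl⟩ : ∃ d, t = (1 + n * m) + d := ⟨t - (1 + n*m), by omega⟩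
  clear ht
  induction d with
  | zero => simpa using hend
  | succ d ih =>
    have : (1 + n * m) + (d + 1) = ((1 + n * m) + d) + 1 := by omega
    rw [this]
    exact hfix _ (by omega) ih
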